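/- Poincaré–Hopf obstruction: there is no nonvanishing continuous vector field on the closed 2-disk D² that points outward at every boundary point. Consequently, any continuous vector field on D² that is outward-pointing along ∂D² has a zero in the interior. -/

import Mathlib

open scoped RealInnerProductSpace

section PoincareHopfAux

open Real Complex Finset

private lemma ph_re_pos_of_near_one {z : ℂ} (h : ‖z - 1‖ < 1) : 0 < z.re := by
  have h1 : (1 : ℂ).re - z.re ≤ ‖(1 : ℂ) - z‖ := by
    calc (1:ℂ).re - z.re = ((1:ℂ) - z).re := by simp
    _ ≤ ‖(1:ℂ) - z‖ := Complex.re_le_norm _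
  rw [norm_sub_rev] at h1
  simp only [Complex.one_re] at h1
  linarith

private lemma ph_prod_div (a : ℕ → ℂ) (h : ∀ k, a k ≠ 0) (n : ℕ) :
    ∏ k ∈ Finset.range n, a (k + 1) / a k = a n / a 0 := by
  induction n with
  | zero => simp [div_self (h 0)]
  | succ n ih =>
      rw [Finset.prod_range_succ, ih, div_mul_div_comm, mul_comm (a n),
        mul_div_mul_right _ _ (h n)]

private lemma ph_exists_lift (f : ℝ → ℂ) (hf : Continuous f) (h0 : ∀ t, f t ≠ 0) :
    ∃ θ : ℝ → ℝ, Continuous θ ∧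
      ∀ t ∈ Set.Icc (0 : ℝ) (2 * π), f t = (‖f t‖ : ℂ) * Complex.exp (θ t * Complex.I) := by
  set u : ℝ → ℂ := fun t => f t / ‖f t‖ with hu
  have hfn : ∀ t, (‖f t‖ : ℂ) ≠ 0 := fun t => by
    simpa using norm_ne_zero_iff.2 (h0 t)
  have hune : ∀ t, u t ≠ 0 := fun t => div_ne_zero (h0 t) (hfn t)
  have hunorm : ∀ t, ‖u t‖ = 1 := fun t => by
    rw [hu]; simp only [norm_div, Complex.norm_real, norm_norm]
    exact div_self (norm_ne_zero_iff.2 (h0 t))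
  have hucont : Continuous u :=
    hf.div (Complex.continuous_ofReal.comp hf.norm) hfn
  -- uniform continuity on [0, 2π]
  have huc : UniformContinuousOn u (Set.Icc 0 (2 * π)) :=
    isCompact_Icc.uniformContinuousOn_of_continuous hucont.continuousOn
  obtain ⟨δ, hδ0, hδ⟩ := (Metric.uniformContinuousOn_iff).1 huc 1 one_pos
  obtain ⟨n, hn⟩ := exists_nat_gt (max 1 (2 * π / δ))
  have hn0 : 0 < (n : ℝ) := lt_of_lt_of_le one_pos (le_of_lt (lt_of_le_of_lt (le_max_left _ _) hn))
  have hstep : 2 * π / n < δ := by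
    rw [div_lt_iff₀ hn0]
    have h2 : 2 * π / δ < n := lt_of_le_of_lt (le_max_right _ _) hn
    calc 2 * π = (2 * π / δ) * δ := by field_simp
    _ < n * δ := mul_lt_mul_of_pos_right h2 hδ0
    _ = δ * n := mul_comm _ _
  set M : ℕ → ℝ → ℝ := fun k t => min (max t 0) (2 * π * k / n) with hM
  have hMcont : ∀ k : ℕ, Continuous fun t => M k t := fun k =>
    (continuous_id.max continuous_const).min continuous_const
  have hMmem : ∀ (k : ℕ) (t : ℝ), M k t ∈ Set.Icc (0 : ℝ) (2 * π * k / n) := by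
    intro k t
    constructor
    · exact le_min (le_max_right _ _) (by positivity)
    · exact min_le_right _ _
  have hMmem' : ∀ k, k ≤ n → ∀ t, M k t ∈ Set.Icc (0 : ℝ) (2 * π) := by
    intro k hk t
    refine ⟨(hMmem k t).1, le_trans (hMmem k t).2 ?_⟩
    rw [div_le_iff₀ hn0]
    have : (k : ℝ) ≤ n := by exact_mod_cast hk
    nlinarith [Real.pi_pos]
  have hMmono : ∀ (k : ℕ) (t : ℝ), M k t ≤ M (k + 1) t := by
    intro k t
    refine min_le_min le_rfl ?_
    gcongr
    push_cast; nlinarith [Real.pi_pos]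
  have hMdiff : ∀ (k : ℕ) (t : ℝ), M (k + 1) t - M k t ≤ 2 * π / n := by
    intro k t
    rcases le_total (max t 0) (2 * π * k / n) with h | h
    · have h' : max t 0 ≤ 2 * π * (k + 1) / n := le_trans h (by gcongr; push_cast; linarith)
      rw [hM]
      simp only
      push_cast
      rw [min_eq_left h, min_eq_left h', sub_self]
      positivity
    · have h1 : M k t = 2 * π * k / n := min_eq_right h
      have h2 : M (k + 1) t ≤ 2 * π * ((k + 1 : ℕ) : ℝ) / n := min_le_right _ _
      rw [h1]
      have : 2 * π * (↑k + 1) / ↑n - 2 * π * ↑k / ↑n = 2 * π / n := by field_simp; ring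
      push_cast at h2 ⊢
      linarith
  -- the ratio stays near 1
  set r : ℕ → ℝ → ℂ := fun k t => u (M (k + 1) t) / u (M k t) with hr
  have hrnear : ∀ (k : ℕ), k < n → ∀ t : ℝ, ‖r k t - 1‖ < 1 := by
    intro k hk t
    have hmem1 := hMmem' (k + 1) (by omega) t
    have hmem2 := hMmem' k (by omega) t
    have hdist : dist (M (k + 1) t) (M k t) < δ := by
      rw [Real.dist_eq, _root_.abs_of_nonneg (by linarith [hMmono k t])]
      linarith [hMdiff k t]
    have h1 : dist (u (M (k + 1) t)) (u (M k t)) < 1 := hδ _ hmem1 _ hmem2 hdist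
    have : r k t - 1 = (u (M (k + 1) t) - u (M k t)) / u (M k t) := by
      rw [hr]; exact div_sub_one (hune _)
    rw [this, norm_div, hunorm, div_one, ← dist_eq_norm]
    exact h1
  have hrre : ∀ (k : ℕ), k < n → ∀ t : ℝ, 0 < (r k t).re := fun k hk t =>
    ph_re_pos_of_near_one (hrnear k hk t)
  have hrcont : ∀ k : ℕ, Continuous fun t => r k t := fun k =>
    (hucont.comp (hMcont (k + 1))).div (hucont.comp (hMcont k))
      (fun t => hune _)
  set θ : ℝ → ℝ := fun t => (u 0).arg + ∑ k ∈ Finset.range n, (r k t).arg with hθ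
  refine ⟨θ, ?_, ?_⟩
  · refine continuous_const.add (continuous_finset_sum _ fun k hk => ?_)
    have hk' : k < n := Finset.mem_range.1 hk
    exact continuous_iff_continuousAt.2 fun t =>
      (Complex.continuousAt_arg (Complex.mem_slitPlane_iff.2 (Or.inl (hrre k hk' t)))).comp
        ((hrcont k).continuousAt)
  · intro t ht
    have hMn : M n t = t := by
      rw [hM]
      simp only
      rw [max_eq_left ht.1]
      rw [min_eq_left]
      rw [mul_div_assoc, div_self (ne_of_gt hn0), mul_one]
      exact ht.2
    have hM0 : M 0 t = 0 := by
      rw [hM]; simp only [Nat.cast_zero, mul_zero, zero_div]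
      exact min_eq_right (le_max_right _ _)
    have hunit : ∀ z : ℂ, ‖z‖ = 1 → Complex.exp (z.arg * Complex.I) = z := by
      intro z hz
      have := Complex.norm_mul_exp_arg_mul_I z
      rw [hz] at this
      simpa using this
    have hexp : Complex.exp (θ t * Complex.I) = u t := by
      rw [hθ]
      push_cast
      rw [add_mul, Complex.exp_add, Finset.sum_mul, Complex.exp_sum]
      rw [hunit _ (hunorm 0)]
      have : ∀ k ∈ Finset.range n, Complex.exp ((r k t).arg * Complex.I) = r k t :=
        fun k hk => hunit _ (by rw [hr]; simp only [norm_div, hunorm, div_one])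
      rw [Finset.prod_congr rfl this, hr]
      have := ph_prod_div (fun k => u (M k t)) (fun k => hune _) n
      rw [this, hMn, hM0]
      rw [mul_comm, div_mul_cancel₀ _ (hune 0)]
    rw [hexp, hu]
    simp only
    rw [mul_div_cancel₀ _ (hfn t)]

/-- winding number of the loop `f` restricted to `[0, 2π]` is `m`. -/
private def PhWinding (f : ℝ → ℂ) (m : ℤ) : Prop :=
  ∃ θ : ℝ → ℝ, Continuous θ ∧
    (∀ t ∈ Set.Icc (0 : ℝ) (2 * π), f t = (‖f t‖ : ℂ) * Complex.exp (θ t * Complex.I)) ∧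
    θ (2 * π) - θ 0 = 2 * π * m

private lemma ph_lift_diff {f : ℝ → ℂ} (h0 : ∀ t, f t ≠ 0) {θ₁ θ₂ : ℝ → ℝ}
    (h₁ : ∀ t ∈ Set.Icc (0 : ℝ) (2 * π), f t = (‖f t‖ : ℂ) * Complex.exp (θ₁ t * Complex.I))
    (h₂ : ∀ t ∈ Set.Icc (0 : ℝ) (2 * π), f t = (‖f t‖ : ℂ) * Complex.exp (θ₂ t * Complex.I))
    {t : ℝ} (ht : t ∈ Set.Icc (0 : ℝ) (2 * π)) :
    ∃ k : ℤ, θ₁ t - θ₂ t = 2 * π * k := by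
  have hfn : (‖f t‖ : ℂ) ≠ 0 := by simpa using norm_ne_zero_iff.2 (h0 t)
  have hexp : Complex.exp (θ₁ t * Complex.I) = Complex.exp (θ₂ t * Complex.I) :=
    mul_left_cancel₀ hfn ((h₁ t ht).symm.trans (h₂ t ht))
  obtain ⟨k, hk⟩ := Complex.exp_eq_exp_iff_exists_int.1 hexp
  refine ⟨k, ?_⟩
  have him := congrArg Complex.im hk
  simp at him
  push_cast at him ⊢
  linarith [him]

private lemma ph_winding_unique {f : ℝ → ℂ} (hcont : Continuous f) (h0 : ∀ t, f t ≠ 0)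
    {m m' : ℤ} (hm : PhWinding f m) (hm' : PhWinding f m') : m = m' := by
  by_contra hne
  -- WLOG m < m'
  wlog hlt : m < m' generalizing m m'
  · exact this hm' hm (Ne.symm hne) (by omega)
  obtain ⟨θ₁, hθ₁c, hθ₁l, hθ₁d⟩ := hm
  obtain ⟨θ₂, hθ₂c, hθ₂l, hθ₂d⟩ := hm'
  set d : ℝ → ℝ := fun t => θ₂ t - θ₁ t with hd
  have hdc : Continuous d := hθ₂c.sub hθ₁c
  have hk : ∀ t ∈ Set.Icc (0 : ℝ) (2 * π), ∃ k : ℤ, d t = 2 * π * k := by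
    intro t ht
    obtain ⟨k, hk⟩ := ph_lift_diff h0 hθ₂l hθ₁l ht
    exact ⟨k, hk⟩
  have h2π : (0 : ℝ) < 2 * π := by positivity
  have hd2 : d (2 * π) - d 0 = 2 * π * (m' - m) := by
    rw [hd]; push_cast; nlinarith [hθ₁d, hθ₂d]
  have hge : 2 * π ≤ d (2 * π) - d 0 := by
    rw [hd2]
    have h1 : (1 : ℤ) ≤ m' - m := by omega
    have : (1 : ℝ) ≤ ((m' - m : ℤ) : ℝ) := by exact_mod_cast h1
    push_cast at this
    nlinarith
  -- IVT gives a point where d equals d 0 + π, impossible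
  have hmemIcc : d 0 + π ∈ Set.Icc (d 0) (d (2 * π)) := by
    constructor <;> nlinarith [Real.pi_pos]
  have := intermediate_value_Icc h2π.le hdc.continuousOn
  obtain ⟨t, htmem, htval⟩ := this ⟨hmemIcc.1, hmemIcc.2⟩
  obtain ⟨k0, hk0⟩ := hk 0 ⟨le_rfl, h2π.le⟩
  obtain ⟨kt, hkt⟩ := hk t htmem
  rw [hkt, hk0] at htval
  have hππ : (2 * (kt - k0) : ℝ) = 1 := by
    have hpi := Real.pi_ne_zero
    push_cast
    nlinarith [htval]
  have : (2 * (kt - k0) : ℤ) = 1 := by exact_mod_cast hππ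
  omega

private lemma ph_winding_leash {f g : ℝ → ℂ} (hf : Continuous f) (hg : Continuous g)
    (h0f : ∀ t, f t ≠ 0) (h0g : ∀ t, g t ≠ 0)
    (hclose : ∀ t, ‖g t - f t‖ < ‖f t‖)
    (hperf : f (2 * π) = f 0) (hperg : g (2 * π) = g 0)
    {m : ℤ} (hm : PhWinding f m) : PhWinding g m := by
  obtain ⟨θ, hθc, hθl, hθd⟩ := hm
  set h : ℝ → ℂ := fun t => g t / f t with hh
  have hhne : ∀ t, h t ≠ 0 := fun t => div_ne_zero (h0g t) (h0f t)
  have hhre : ∀ t, 0 < (h t).re := by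
    intro t
    apply ph_re_pos_of_near_one
    rw [hh]
    simp only
    rw [div_sub_one (h0f t), norm_div]
    rw [div_lt_one (norm_pos_iff.2 (h0f t))]
    exact hclose t
  have hhc : Continuous h := hg.div hf h0f
  have hargc : Continuous fun t => (h t).arg := continuous_iff_continuousAt.2 fun t =>
    (Complex.continuousAt_arg (Complex.mem_slitPlane_iff.2 (Or.inl (hhre t)))).comp hhc.continuousAt
  refine ⟨fun t => θ t + (h t).arg, hθc.add hargc, ?_, ?_⟩
  · intro t ht
    have hgt : g t = f t * h t := by
      simp only [hh]; field_simp [h0f t]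
    have habs : (‖h t‖ : ℂ) * Complex.exp ((h t).arg * Complex.I) = h t :=
      Complex.norm_mul_exp_arg_mul_I _
    have hnorm : ‖g t‖ = ‖f t‖ * ‖h t‖ := by rw [hgt, norm_mul]
    have key : (↑‖f t‖ * Complex.exp (θ t * Complex.I)) * h t
        = ((‖f t‖ * ‖h t‖ : ℝ) : ℂ) * Complex.exp ((θ t + (h t).arg) * Complex.I) := by
      have h2 : ((‖h t‖ : ℝ) : ℂ) * Complex.exp ((h t).arg * Complex.I) = h t := by
        exact_mod_cast habs
      conv_lhs => rw [← h2]
      push_cast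
      rw [add_mul, Complex.exp_add]
      ring
    simp only
    calc g t = ↑‖f t‖ * Complex.exp (θ t * Complex.I) * h t := by rw [← hθl t ht, ← hgt]
    _ = ((‖f t‖ * ‖h t‖ : ℝ) : ℂ) * Complex.exp ((θ t + (h t).arg) * Complex.I) := key
    _ = ↑‖g t‖ * Complex.exp (((θ t + (h t).arg : ℝ) : ℂ) * Complex.I) := by
        rw [← hnorm]; push_cast; ring
  · have hper : h (2 * π) = h 0 := by rw [hh]; simp only [hperf, hperg]
    simp only [hper]
    push_cast
    linarith [hθd]

private lemma ph_winding_const (c : ℂ) : PhWinding (fun _ => c) 0 := by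
  refine ⟨fun _ => c.arg, continuous_const, fun t _ => ?_, by push_cast; ring⟩
  simp only
  have := Complex.norm_mul_exp_arg_mul_I c
  exact this.symm

private lemma ph_no_field (W : ℂ → ℂ) (hWc : ContinuousOn W (Metric.closedBall 0 1))
    (hWne : ∀ z : ℂ, ‖z‖ ≤ 1 → W z ≠ 0)
    (hWout : ∀ z : ℂ, ‖z‖ = 1 → 0 < ((starRingEnd ℂ) (W z) * z).re) : False := by
  have h2π : (0 : ℝ) < 2 * π := by positivity
  set F : ℝ → ℝ → ℂ := fun s t => W (s * Complex.exp (t * Complex.I)) with hF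
  have hnorm_st : ∀ (s t : ℝ), ‖(s : ℂ) * Complex.exp (t * Complex.I)‖ = |s| := by
    intro s t
    rw [norm_mul, Complex.norm_exp_ofReal_mul_I,
      mul_one, Complex.norm_real, Real.norm_eq_abs]
  have hball : ∀ s : ℝ, |s| ≤ 1 → ∀ t : ℝ, (s : ℂ) * Complex.exp (t * Complex.I) ∈ Metric.closedBall (0:ℂ) 1 := by
    intro s hs t
    rw [Metric.mem_closedBall, dist_zero_right, hnorm_st]
    exact hs
  have hFc : ∀ s : ℝ, |s| ≤ 1 → Continuous (F s) := by
    intro s hs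
    apply hWc.comp_continuous
    · exact continuous_const.mul (Complex.continuous_exp.comp
        (Complex.continuous_ofReal.mul continuous_const))
    · exact fun t => hball s hs t
  have hFne : ∀ s : ℝ, |s| ≤ 1 → ∀ t : ℝ, F s t ≠ 0 := by
    intro s hs t
    exact hWne _ (by rw [hnorm_st]; exact hs)
  have hFper : ∀ s : ℝ, F s (2 * π) = F s 0 := by
    intro s
    rw [hF]
    simp only
    congr 1
    push_cast
    rw [Complex.exp_two_pi_mul_I]
    simp
  -- lower bound on ‖W‖
  obtain ⟨z₀, hz₀mem, hz₀⟩ := (isCompact_closedBall (0:ℂ) 1).exists_isMinOn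
    ⟨0, by simp⟩ hWc.norm
  set c : ℝ := ‖W z₀‖ with hc
  have hc0 : 0 < c := norm_pos_iff.2 (hWne z₀ (by simpa [dist_zero_right] using hz₀mem))
  have hcle : ∀ z : ℂ, ‖z‖ ≤ 1 → c ≤ ‖W z‖ := by
    intro z hz
    exact hz₀ (by simpa [Metric.mem_closedBall, dist_zero_right] using hz)
  -- uniform continuity
  obtain ⟨δ, hδ0, hδ⟩ := Metric.uniformContinuousOn_iff.1
    ((isCompact_closedBall (0:ℂ) 1).uniformContinuousOn_of_continuous hWc) c hc0
  -- leash transfer between close parameters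
  have htransfer : ∀ s s' : ℝ, |s| ≤ 1 → |s'| ≤ 1 → |s - s'| < δ →
      ∀ m : ℤ, PhWinding (F s) m → PhWinding (F s') m := by
    intro s s' hs hs' hss m hm
    apply ph_winding_leash (hFc s hs) (hFc s' hs') (hFne s hs) (hFne s' hs')
      ?_ (hFper s) (hFper s') hm
    intro t
    have hdist : dist ((s' : ℂ) * Complex.exp (t * Complex.I))
        ((s : ℂ) * Complex.exp (t * Complex.I)) < δ := by
      rw [dist_eq_norm, ← sub_mul, ← Complex.ofReal_sub, hnorm_st]
      · calc |s' - s| = |s - s'| := abs_sub_comm _ _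
        _ < δ := hss
    have := hδ _ (hball s' hs' t) _ (hball s hs t) hdist
    rw [dist_eq_norm] at this
    calc ‖F s' t - F s t‖ < c := this
    _ ≤ ‖F s t‖ := hcle _ (by rw [hnorm_st]; exact hs)
  -- the set of parameters with winding number zero
  set A : Set ℝ := {s | s ∈ Set.Icc (0:ℝ) 1 ∧ PhWinding (F s) 0} with hA
  have habs : ∀ s : ℝ, s ∈ Set.Icc (0:ℝ) 1 → |s| ≤ 1 := by
    intro s hs; rw [_root_.abs_of_nonneg hs.1]; exact hs.2
  have h0A : (0 : ℝ) ∈ A := by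
    refine ⟨⟨le_rfl, zero_le_one⟩, ?_⟩
    have : F 0 = fun _ => W 0 := by
      funext t; rw [hF]; simp
    rw [this]
    exact ph_winding_const _
  have hbdd : BddAbove A := ⟨1, fun s hs => hs.1.2⟩
  set σ : ℝ := sSup A with hσdef
  have hσmem : σ ∈ Set.Icc (0:ℝ) 1 :=
    ⟨le_csSup hbdd h0A, csSup_le ⟨0, h0A⟩ fun s hs => hs.1.2⟩
  have hσ0 : PhWinding (F σ) 0 := by
    obtain ⟨θ, hθc, hθl⟩ := ph_exists_lift (F σ) (hFc σ (habs σ hσmem)) (hFne σ (habs σ hσmem))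
    -- winding of F σ exists
    obtain ⟨k, hk⟩ := ph_lift_diff (hFne σ (habs σ hσmem)) hθl hθl ⟨le_rfl, h2π.le⟩
    -- build an integer winding directly
    have hper := hFper σ
    have hex : ∃ m : ℤ, PhWinding (F σ) m := by
      have h1 := hθl (2 * π) ⟨h2π.le, le_rfl⟩
      have h2 := hθl 0 ⟨le_rfl, h2π.le⟩
      rw [hper] at h1
      have hfn : ((‖F σ 0‖ : ℝ) : ℂ) ≠ 0 := by
        simpa using norm_ne_zero_iff.2 (hFne σ (habs σ hσmem) 0)
      have hexp : Complex.exp (θ (2 * π) * Complex.I) = Complex.exp (θ 0 * Complex.I) :=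
        mul_left_cancel₀ hfn ((h1).symm.trans h2)
      obtain ⟨k', hk'⟩ := Complex.exp_eq_exp_iff_exists_int.1 hexp
      have him := congrArg Complex.im hk'
      simp at him
      exact ⟨k', θ, hθc, hθl, by rw [him]; push_cast; ring⟩
    obtain ⟨m, hm⟩ := hex
    obtain ⟨s, hsA, hs⟩ := exists_lt_of_lt_csSup ⟨0, h0A⟩ (show σ - δ < σ by linarith)
    have hsle : s ≤ σ := le_csSup hbdd hsA
    have h1 : PhWinding (F s) m := htransfer σ s (habs σ hσmem) (habs s hsA.1)
      (by rw [_root_.abs_of_nonneg (by linarith [hsA.1.1] : (0:ℝ) ≤ σ - s)]; linarith) m hm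
    have : m = 0 := ph_winding_unique (hFc s (habs s hsA.1)) (hFne s (habs s hsA.1)) h1 hsA.2
    rwa [this] at hm
  have hσ1 : σ = 1 := by
    by_contra hne
    have hlt : σ < 1 := lt_of_le_of_ne hσmem.2 hne
    set s' : ℝ := min (σ + δ / 2) 1 with hs'
    have hs'mem : s' ∈ Set.Icc (0:ℝ) 1 :=
      ⟨le_min (by linarith [hσmem.1]) zero_le_one, min_le_right _ _⟩
    have hs'gt : σ < s' := lt_min (by linarith) hlt
    have hs'close : |σ - s'| < δ := by
      rw [abs_sub_comm, _root_.abs_of_nonneg (by linarith : (0:ℝ) ≤ s' - σ)]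
      have : s' ≤ σ + δ / 2 := min_le_left _ _
      linarith
    have : s' ∈ A := ⟨hs'mem, htransfer σ s' (habs σ hσmem) (habs s' hs'mem) hs'close 0 hσ0⟩
    have := le_csSup hbdd this
    linarith
  -- boundary loop has winding 0
  rw [hσ1] at hσ0
  obtain ⟨θ, hθc, hθl, hθd⟩ := hσ0
  -- outward condition forces winding 1 : derive contradiction via IVT
  have hcos : ∀ t ∈ Set.Icc (0:ℝ) (2 * π), 0 < Real.cos (t - θ t) := by
    intro t ht
    have hz : ‖Complex.exp ((t:ℝ) * Complex.I)‖ = 1 := by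
      rw [Complex.norm_exp_ofReal_mul_I]
    have hout := hWout _ hz
    have hF1 : F 1 t = W (Complex.exp (t * Complex.I)) := by rw [hF]; simp
    have hlift := hθl t ht
    rw [hF1] at hlift
    rw [hlift] at hout
    have hnW : ‖W (Complex.exp ((t:ℝ) * Complex.I))‖ = ‖F 1 t‖ := by rw [hF1]
    -- compute the real part
    have hconj : (starRingEnd ℂ) ((‖F 1 t‖ : ℂ) * Complex.exp (θ t * Complex.I))
        = (‖F 1 t‖ : ℂ) * Complex.exp (-(θ t) * Complex.I) := by
      rw [map_mul, Complex.conj_ofReal, ← Complex.exp_conj]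
      congr 1
      simp [Complex.ext_iff]
    have hkey : ((starRingEnd ℂ) ((‖F 1 t‖ : ℂ) * Complex.exp (θ t * Complex.I))
        * Complex.exp ((t:ℝ) * Complex.I)).re = ‖F 1 t‖ * Real.cos (t - θ t) := by
      rw [hconj, mul_assoc, ← Complex.exp_add]
      have heq : -(θ t : ℝ) * Complex.I + (t : ℝ) * Complex.I
          = ((t - θ t : ℝ) : ℂ) * Complex.I := by push_cast; ring
      rw [heq, Complex.re_ofReal_mul, Complex.exp_ofReal_mul_I_re]
    rw [hnW] at hout
    rw [hkey] at hout
    have hρ : 0 < ‖F 1 t‖ := norm_pos_iff.2 (hFne 1 (by norm_num) t)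
    nlinarith [hout, hρ]
  -- IVT contradiction
  set g : ℝ → ℝ := fun t => t - θ t with hg
  have hgc : Continuous g := continuous_id.sub hθc
  have hg2 : g (2 * π) = g 0 + 2 * π := by
    rw [hg]
    simp only
    push_cast at hθd
    linarith [hθd]
  have hsub : Set.Icc (g 0) (g (2 * π)) ⊆ g '' Set.Icc 0 (2 * π) :=
    intermediate_value_Icc h2π.le hgc.continuousOn
  obtain ⟨t₀, ht₀mem, ht₀⟩ := hsub (show g 0 + π ∈ Set.Icc (g 0) (g (2 * π)) from
    ⟨by linarith [Real.pi_pos], by rw [hg2]; linarith [Real.pi_pos]⟩)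
  have h1 : 0 < Real.cos (g t₀) := hcos t₀ ht₀mem
  have h2 : 0 < Real.cos (g 0) := hcos 0 ⟨le_rfl, h2π.le⟩
  rw [ht₀, Real.cos_add_pi] at h1
  linarith

end PoincareHopfAux

/-- Poincaré–Hopf obstruction: no nonvanishing continuous vector field on the closed 2-disk
points outward at every boundary point; consequently any continuous vector field on the disk
that is outward-pointing along the boundary has a zero in the interior. -/
theorem no_nonvanishing_outward_field_on_disk :
    (¬ ∃ V : EuclideanSpace ℝ (Fin 2) → EuclideanSpace ℝ (Fin 2),
        ContinuousOn V (Metric.closedBall 0 1) ∧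
        (∀ p ∈ Metric.closedBall (0 : EuclideanSpace ℝ (Fin 2)) 1, V p ≠ 0) ∧
        (∀ p : EuclideanSpace ℝ (Fin 2), ‖p‖ = 1 → 0 < ⟪V p, p⟫)) ∧
    (∀ V : EuclideanSpace ℝ (Fin 2) → EuclideanSpace ℝ (Fin 2),
        ContinuousOn V (Metric.closedBall 0 1) →
        (∀ p : EuclideanSpace ℝ (Fin 2), ‖p‖ = 1 → 0 < ⟪V p, p⟫) →
        ∃ p : EuclideanSpace ℝ (Fin 2), ‖p‖ < 1 ∧ V p = 0) := by
  have main : ¬ ∃ V : EuclideanSpace ℝ (Fin 2) → EuclideanSpace ℝ (Fin 2),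
      ContinuousOn V (Metric.closedBall 0 1) ∧
      (∀ p ∈ Metric.closedBall (0 : EuclideanSpace ℝ (Fin 2)) 1, V p ≠ 0) ∧
      (∀ p : EuclideanSpace ℝ (Fin 2), ‖p‖ = 1 → 0 < ⟪V p, p⟫) := by
    rintro ⟨V, hVc, hVne, hVout⟩
    set Φ : ℂ ≃ₗᵢ[ℝ] EuclideanSpace ℝ (Fin 2) := (Complex.orthonormalBasisOneI.repr : ℂ ≃ₗᵢ[ℝ] EuclideanSpace ℝ (Fin 2)).symm.symm with hΦ
    set W : ℂ → ℂ := fun z => Φ.symm (V (Φ z)) with hW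
    have hmaps : ∀ z : ℂ, ‖z‖ ≤ 1 → Φ z ∈ Metric.closedBall (0 : EuclideanSpace ℝ (Fin 2)) 1 := by
      intro z hz
      rw [Metric.mem_closedBall, dist_zero_right, Φ.norm_map]
      exact hz
    have hWc : ContinuousOn W (Metric.closedBall 0 1) := by
      apply Φ.symm.continuous.comp_continuousOn
      apply hVc.comp Φ.continuous.continuousOn
      intro z hz
      exact hmaps z (by simpa [dist_zero_right] using hz)
    have hWne : ∀ z : ℂ, ‖z‖ ≤ 1 → W z ≠ 0 := by
      intro z hz h
      have : V (Φ z) = 0 := by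
        have := congrArg Φ h
        simpa [hW] using this
      exact hVne (Φ z) (hmaps z hz) this
    have hWout : ∀ z : ℂ, ‖z‖ = 1 → 0 < ((starRingEnd ℂ) (W z) * z).re := by
      intro z hz
      have h1 : 0 < ⟪V (Φ z), Φ z⟫ := hVout (Φ z) (by rw [Φ.norm_map]; exact hz)
      have h2 : V (Φ z) = Φ (W z) := by simp [hW]
      rw [h2, Φ.inner_map_map] at h1
      rwa [Complex.inner, mul_comm] at h1
    exact ph_no_field W hWc hWne hWout
  refine ⟨main, ?_⟩
  intro V hVc hVout
  by_contra h
  push_neg at h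
  apply main
  refine ⟨V, hVc, ?_, hVout⟩
  intro p hp
  rw [Metric.mem_closedBall, dist_zero_right] at hp
  rcases lt_or_eq_of_le hp with hlt | heq
  · exact h p hlt
  · intro hV0
    have := hVout p heq
    rw [hV0] at this
    simp at this
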